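/- There do not exist polynomials f(x,y), h(x,z), g(u,v) with real coefficients such that (x+y)z + y³z³ = g(f(x,y), h(x,z)) as polynomials in ℝ[x,y,z]. -/

import Mathlib

open MvPolynomial

noncomputable section Stmt14Aux

namespace Stmt14Aux

lemma vec2_comp {S T : Type*} (φ : S → T) (A B : S) :
    (fun i => φ (![A, B] i)) = ![φ A, φ B] := by
  funext i; fin_cases i <;> simp

lemma aeval2_comp {S T : Type*} [CommSemiring S] [CommSemiring T] [Algebra ℝ S] [Algebra ℝ T]
    (φ : S →ₐ[ℝ] T) (A B : S) (p : MvPolynomial (Fin 2) ℝ) :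
    φ (aeval ![A, B] p) = aeval ![φ A, φ B] p := by
  rw [MvPolynomial.comp_aeval_apply, vec2_comp]

/-- Substitution of `X 1 := C d` in two variables, as an algebra self-map. -/
abbrev τ (d : ℝ) : MvPolynomial (Fin 2) ℝ →ₐ[ℝ] MvPolynomial (Fin 2) ℝ :=
  aeval ![X 0, C d]

/-- Divisibility of `p - p[X1 := C d]` by `X 1 - C d`. -/
lemma dvd_sub_aeval (d : ℝ) (p : MvPolynomial (Fin 2) ℝ) :
    (X 1 - C d) ∣ (p - τ d p) := by
  induction p using MvPolynomial.induction_on with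
  | C a => simp [MvPolynomial.aeval_C, MvPolynomial.algebraMap_eq]
  | add p q hp hq =>
      have key : p + q - τ d (p + q) = (p - τ d p) + (q - τ d q) := by
        rw [map_add]; ring
      rw [key]; exact dvd_add hp hq
  | mul_X p i hp =>
      have key : p * X i - τ d (p * X i)
          = (p - τ d p) * X i + τ d p * (X i - τ d (X i)) := by
        rw [map_mul]; ring
      rw [key]
      refine dvd_add (Dvd.dvd.mul_right hp _) (Dvd.dvd.mul_left ?_ _)
      fin_cases i <;> simp

/-- The standard iso-like embedding `ℝ[x,y] → ℝ[x][y]` (x inner, y outer). -/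
abbrev Θ : MvPolynomial (Fin 2) ℝ →ₐ[ℝ] Polynomial (Polynomial ℝ) :=
  aeval ![Polynomial.C Polynomial.X, Polynomial.X]

lemma theta_bridge {S : Type*} [CommRing S] [Algebra ℝ S] (A B : S)
    (p : MvPolynomial (Fin 2) ℝ) :
    aeval ![A, B] p
      = Polynomial.eval₂ ((Polynomial.aeval A).toRingHom : Polynomial ℝ →+* S) B (Θ p) := by
  have hcomp : (Polynomial.eval₂RingHom
        ((Polynomial.aeval A).toRingHom : Polynomial ℝ →+* S) B).comp
        (Θ : MvPolynomial (Fin 2) ℝ →ₐ[ℝ] Polynomial (Polynomial ℝ)).toRingHom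
      = ((aeval ![A, B] : MvPolynomial (Fin 2) ℝ →ₐ[ℝ] S)).toRingHom := by
    apply MvPolynomial.ringHom_ext
    · intro r
      simp [MvPolynomial.algebraMap_eq]
    · intro i
      fin_cases i <;> simp
  have := RingHom.congr_fun hcomp p
  simpa using this.symm

lemma theta_leftinv (p : MvPolynomial (Fin 2) ℝ) :
    Polynomial.eval₂ (Polynomial.eval₂RingHom (MvPolynomial.C : ℝ →+* MvPolynomial (Fin 2) ℝ)
      (X 0)) (X 1) (Θ p) = p := by
  have hcomp : (Polynomial.eval₂RingHom
        (Polynomial.eval₂RingHom (MvPolynomial.C : ℝ →+* MvPolynomial (Fin 2) ℝ) (X 0))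
        (X 1)).comp
        (Θ : MvPolynomial (Fin 2) ℝ →ₐ[ℝ] Polynomial (Polynomial ℝ)).toRingHom
      = RingHom.id (MvPolynomial (Fin 2) ℝ) := by
    apply MvPolynomial.ringHom_ext
    · intro r
      simp [MvPolynomial.algebraMap_eq]
    · intro i
      fin_cases i <;> simp
  exact RingHom.congr_fun hcomp p

end Stmt14Aux

end Stmt14Aux

open Stmt14Aux

/-- there are no polynomials `f(x,y)`, `h(x,z)`, `g(u,v)` over ℝ with
`(x+y)z + y³z³ = g(f(x,y), h(x,z))` in `ℝ[x,y,z]`. -/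
theorem stmt14 :
    ¬ ∃ f h g : MvPolynomial (Fin 2) ℝ,
      ((X 0 + X 1) * X 2 + (X 1) ^ 3 * (X 2) ^ 3 : MvPolynomial (Fin 3) ℝ) =
        aeval ![aeval ![(X 0 : MvPolynomial (Fin 3) ℝ), X 1] f,
                aeval ![(X 0 : MvPolynomial (Fin 3) ℝ), X 2] h] g := by
  rintro ⟨f, h, g, E⟩
  -- ## pointwise version of the identity
  have master : ∀ a b c : ℝ,
      (a + b) * c + b ^ 3 * c ^ 3
        = aeval ![(aeval ![a, b] f : ℝ), (aeval ![a, c] h : ℝ)] g := by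
    intro a b c
    have h1 := congrArg (⇑(aeval ![a, b, c] : MvPolynomial (Fin 3) ℝ →ₐ[ℝ] ℝ)) E
    rw [aeval2_comp, aeval2_comp, aeval2_comp] at h1
    simp only [map_add, map_mul, map_pow, aeval_X] at h1
    simpa using h1
  -- ## univariate slices
  have fa_eval : ∀ a b : ℝ,
      Polynomial.eval b (aeval ![Polynomial.C a, Polynomial.X] f : Polynomial ℝ)
        = aeval ![a, b] f := by
    intro a b
    have h1 := aeval2_comp (Polynomial.aeval b : Polynomial ℝ →ₐ[ℝ] ℝ)
      (Polynomial.C a) Polynomial.X f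
    simpa [Polynomial.coe_aeval_eq_eval] using h1
  have hz0_eval : ∀ a : ℝ,
      Polynomial.eval a (aeval ![Polynomial.X, Polynomial.C 0] h : Polynomial ℝ)
        = aeval ![a, 0] h := by
    intro a
    have h1 := aeval2_comp (Polynomial.aeval a : Polynomial ℝ →ₐ[ℝ] ℝ)
      Polynomial.X (Polynomial.C 0) h
    simpa [Polynomial.coe_aeval_eq_eval] using h1
  have gu_eval : ∀ u v : ℝ,
      Polynomial.eval u (aeval ![Polynomial.X, Polynomial.C v] g : Polynomial ℝ)
        = aeval ![u, v] g := by
    intro u v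
    have h1 := aeval2_comp (Polynomial.aeval u : Polynomial ℝ →ₐ[ℝ] ℝ)
      Polynomial.X (Polynomial.C v) g
    simpa [Polynomial.coe_aeval_eq_eval] using h1
  have gv_eval : ∀ u v : ℝ,
      Polynomial.eval v (aeval ![Polynomial.C u, Polynomial.X] g : Polynomial ℝ)
        = aeval ![u, v] g := by
    intro u v
    have h1 := aeval2_comp (Polynomial.aeval v : Polynomial ℝ →ₐ[ℝ] ℝ)
      (Polynomial.C u) Polynomial.X g
    simpa [Polynomial.coe_aeval_eq_eval] using h1
  -- ## step 2 : each slice f(a, ·) is nonconstant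
  have step2 : ∀ a : ℝ,
      (aeval ![Polynomial.C a, Polynomial.X] f : Polynomial ℝ)
        ≠ Polynomial.C ((aeval ![Polynomial.C a, Polynomial.X] f : Polynomial ℝ).coeff 0) := by
    intro a hc
    have hv : ∀ b : ℝ, (aeval ![a, b] f : ℝ)
        = (aeval ![Polynomial.C a, Polynomial.X] f : Polynomial ℝ).coeff 0 := by
      intro b
      rw [← fa_eval a b, hc, Polynomial.eval_C, Polynomial.coeff_C_zero]
    have m0 := master a 0 1
    have m1 := master a 1 1
    rw [hv 0] at m0
    rw [hv 1] at m1
    have : (a + 0) * 1 + (0:ℝ) ^ 3 * 1 ^ 3 = (a + 1) * 1 + 1 ^ 3 * 1 ^ 3 :=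
      m0.trans m1.symm
    norm_num at this
    linarith
  -- ## step 3 : g(·, h(a,0)) = 0 for every a
  have step3 : ∀ a : ℝ,
      (aeval ![Polynomial.X,
        Polynomial.C (Polynomial.eval a (aeval ![Polynomial.X, Polynomial.C 0] h))] g
        : Polynomial ℝ) = 0 := by
    intro a
    set Ga : Polynomial ℝ := aeval ![Polynomial.X,
        Polynomial.C (Polynomial.eval a (aeval ![Polynomial.X, Polynomial.C 0] h))] g with hGa
    have hcomp : Ga.comp (aeval ![Polynomial.C a, Polynomial.X] f) = 0 := by
      apply Polynomial.funext
      intro b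
      rw [Polynomial.eval_comp, fa_eval a b, hGa, gu_eval, Polynomial.eval_zero]
      rw [hz0_eval a]
      have := master a b 0
      simpa using this.symm
    rcases Polynomial.comp_eq_zero_iff.mp hcomp with h0 | ⟨_, hC⟩
    · exact h0
    · exact absurd hC (step2 a)
  -- ## g ≠ 0
  have hg0 : g ≠ 0 := by
    intro hg
    rw [hg, map_zero] at E
    have := congrArg (⇑(aeval ![(1:ℝ), 1, 1] : MvPolynomial (Fin 3) ℝ →ₐ[ℝ] ℝ)) E
    simp only [map_add, map_mul, map_pow, aeval_X, map_zero] at this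
    rw [show (![(1:ℝ), 1, 1] 2) = 1 from rfl] at this
    norm_num at this
  -- ## h(x, 0) is a constant δ
  obtain ⟨u0, hu0⟩ : ∃ u : ℝ,
      (aeval ![Polynomial.C u, Polynomial.X] g : Polynomial ℝ) ≠ 0 := by
    by_contra hall
    push_neg at hall
    apply hg0
    apply MvPolynomial.funext
    intro x
    have hx : eval x g = aeval ![x 0, x 1] g := by
      have hxe : x = ![x 0, x 1] := by
        funext i; fin_cases i <;> simp
      conv_lhs => rw [hxe]
      rw [← MvPolynomial.coe_aeval_eq_eval]
      rfl
    rw [hx, ← gv_eval (x 0) (x 1), hall (x 0), Polynomial.eval_zero, map_zero]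
  have hcomp2 : (aeval ![Polynomial.C u0, Polynomial.X] g : Polynomial ℝ).comp
      (aeval ![Polynomial.X, Polynomial.C 0] h) = 0 := by
    apply Polynomial.funext
    intro a
    rw [Polynomial.eval_comp, hz0_eval a, gv_eval, Polynomial.eval_zero]
    rw [← hz0_eval a, ← gu_eval u0, step3 a, Polynomial.eval_zero]
  have hhz0C : (aeval ![Polynomial.X, Polynomial.C 0] h : Polynomial ℝ)
      = Polynomial.C ((aeval ![Polynomial.X, Polynomial.C 0] h : Polynomial ℝ).coeff 0) := by
    rcases Polynomial.comp_eq_zero_iff.mp hcomp2 with h0 | ⟨_, hC⟩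
    · exact absurd h0 hu0
    · exact hC
  set δ : ℝ := (aeval ![Polynomial.X, Polynomial.C 0] h : Polynomial ℝ).coeff 0 with hδ
  -- g(u, δ) = 0 as a univariate polynomial
  have hgδ : (aeval ![Polynomial.X, Polynomial.C δ] g : Polynomial ℝ) = 0 := by
    have := step3 0
    rw [hhz0C, Polynomial.eval_C] at this
    exact this
  -- ## factor g = (X 1 - C delta) * g1
  have hτg : τ δ g = 0 := by
    have h1 := aeval2_comp
      (Polynomial.aeval (X 0 : MvPolynomial (Fin 2) ℝ) : Polynomial ℝ →ₐ[ℝ] MvPolynomial (Fin 2) ℝ)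
      Polynomial.X (Polynomial.C δ) g
    rw [hgδ, map_zero] at h1
    simpa [MvPolynomial.algebraMap_eq] using h1.symm
  obtain ⟨g₁, hg₁⟩ : (X 1 - C δ) ∣ g := by
    have hd := dvd_sub_aeval δ g
    rwa [show (τ δ g) = 0 from hτg, sub_zero] at hd
  -- ## h = C δ + X 1 * k
  have hτh : τ 0 h = C δ := by
    have h1 := aeval2_comp
      (Polynomial.aeval (X 0 : MvPolynomial (Fin 2) ℝ) : Polynomial ℝ →ₐ[ℝ] MvPolynomial (Fin 2) ℝ)
      Polynomial.X (Polynomial.C 0) h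
    rw [hhz0C] at h1
    simpa [MvPolynomial.algebraMap_eq] using h1.symm
  obtain ⟨k, hk0⟩ : (X 1 - C (0:ℝ)) ∣ (h - C δ) := by
    have hd := dvd_sub_aeval 0 h
    rwa [hτh] at hd
  have hk : h = C δ + X 1 * k := by
    rw [MvPolynomial.C_0, sub_zero] at hk0
    linear_combination hk0
  -- ## the identity with z cancelled
  have hHval : (aeval ![(X 0 : MvPolynomial (Fin 3) ℝ), X 2] h)
      = C δ + X 2 * (aeval ![(X 0 : MvPolynomial (Fin 3) ℝ), X 2] k) := by
    rw [hk]
    simp [MvPolynomial.algebraMap_eq]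
  have E2 : ((X 0 + X 1) + (X 1)^3 * (X 2)^2 : MvPolynomial (Fin 3) ℝ)
      = (aeval ![(X 0 : MvPolynomial (Fin 3) ℝ), X 2] k)
        * aeval ![aeval ![(X 0 : MvPolynomial (Fin 3) ℝ), X 1] f,
                  aeval ![(X 0 : MvPolynomial (Fin 3) ℝ), X 2] h] g₁ := by
    have hx2 : (X 2 : MvPolynomial (Fin 3) ℝ) ≠ 0 := MvPolynomial.X_ne_zero 2
    apply mul_left_cancel₀ hx2
    have hagg : aeval ![aeval ![(X 0 : MvPolynomial (Fin 3) ℝ), X 1] f,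
                  aeval ![(X 0 : MvPolynomial (Fin 3) ℝ), X 2] h] g
        = (aeval ![(X 0 : MvPolynomial (Fin 3) ℝ), X 2] h - C δ)
          * aeval ![aeval ![(X 0 : MvPolynomial (Fin 3) ℝ), X 1] f,
                  aeval ![(X 0 : MvPolynomial (Fin 3) ℝ), X 2] h] g₁ := by
      conv_lhs => rw [hg₁]
      rw [map_mul, map_sub]
      simp [MvPolynomial.algebraMap_eq]
    calc (X 2 : MvPolynomial (Fin 3) ℝ) * ((X 0 + X 1) + (X 1)^3 * (X 2)^2)
        = (X 0 + X 1) * X 2 + (X 1)^3 * (X 2)^3 := by ring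
      _ = aeval ![aeval ![(X 0 : MvPolynomial (Fin 3) ℝ), X 1] f,
                  aeval ![(X 0 : MvPolynomial (Fin 3) ℝ), X 2] h] g := E
      _ = _ := by rw [hagg, hHval]; ring
  -- ## substitute y := 0 : X 0 = K * M
  have E3 : (X 0 : MvPolynomial (Fin 3) ℝ)
      = (aeval ![(X 0 : MvPolynomial (Fin 3) ℝ), X 2] k)
        * (aeval ![(X 0 : MvPolynomial (Fin 3) ℝ), (0 : MvPolynomial (Fin 3) ℝ), X 2]
            (aeval ![aeval ![(X 0 : MvPolynomial (Fin 3) ℝ), X 1] f,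
                  aeval ![(X 0 : MvPolynomial (Fin 3) ℝ), X 2] h] g₁)) := by
    have h1 := congrArg
      (⇑(aeval ![(X 0 : MvPolynomial (Fin 3) ℝ), (0 : MvPolynomial (Fin 3) ℝ), X 2]
        : MvPolynomial (Fin 3) ℝ →ₐ[ℝ] MvPolynomial (Fin 3) ℝ)) E2
    rw [map_mul] at h1
    rw [aeval2_comp] at h1
    simp only [map_add, map_mul, map_pow, aeval_X] at h1
    simpa using h1
  -- ## transport to ℝ[x][z] and analyse degrees
  have E4 : (Polynomial.C Polynomial.X : Polynomial (Polynomial ℝ))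
      = (Θ k) * ((aeval ![Polynomial.C Polynomial.X, (0 : Polynomial (Polynomial ℝ)),
          Polynomial.X] : MvPolynomial (Fin 3) ℝ →ₐ[ℝ] Polynomial (Polynomial ℝ))
          ((aeval ![(X 0 : MvPolynomial (Fin 3) ℝ), (0 : MvPolynomial (Fin 3) ℝ), X 2]
            (aeval ![aeval ![(X 0 : MvPolynomial (Fin 3) ℝ), X 1] f,
                  aeval ![(X 0 : MvPolynomial (Fin 3) ℝ), X 2] h] g₁)))) := by
    have h1 := congrArg
      (⇑(aeval ![Polynomial.C Polynomial.X, (0 : Polynomial (Polynomial ℝ)), Polynomial.X]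
        : MvPolynomial (Fin 3) ℝ →ₐ[ℝ] Polynomial (Polynomial ℝ))) E3
    rw [map_mul, aeval2_comp] at h1
    simpa using h1
  obtain ⟨M, E4'⟩ : ∃ M : Polynomial (Polynomial ℝ),
      (Polynomial.C Polynomial.X : Polynomial (Polynomial ℝ)) = Θ k * M := ⟨_, E4⟩
  have hCX0 : (Polynomial.C Polynomial.X : Polynomial (Polynomial ℝ)) ≠ 0 := by
    simpa using Polynomial.X_ne_zero (R := ℝ)
  have hk'0 : Θ k ≠ 0 := fun hz => hCX0 (by rw [E4', hz, zero_mul])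
  have hM0 : M ≠ 0 := fun hz => hCX0 (by rw [E4', hz, mul_zero])
  have hsum : (Θ k).natDegree + M.natDegree = 0 := by
    have hmul := Polynomial.natDegree_mul hk'0 hM0
    rw [← E4'] at hmul
    simpa using hmul.symm
  have hκC : Θ k = Polynomial.C ((Θ k).coeff 0) :=
    Polynomial.eq_C_of_natDegree_eq_zero (by omega)
  have hMC : M = Polynomial.C (M.coeff 0) :=
    Polynomial.eq_C_of_natDegree_eq_zero (by omega)
  have hκmm : ((Θ k).coeff 0) * (M.coeff 0) = Polynomial.X := by
    have h5 := E4'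
    rw [hκC, hMC, ← Polynomial.C_mul] at h5
    exact (Polynomial.C_injective h5).symm
  have hkval : k = Polynomial.eval₂ MvPolynomial.C (X 0) ((Θ k).coeff 0) := by
    have h1 := theta_leftinv k
    rw [hκC, Polynomial.eval₂_C, Polynomial.coe_eval₂RingHom] at h1
    exact h1.symm
  have hkviaκ : ∀ a b : ℝ, (aeval ![a, b] k : ℝ) = Polynomial.eval a ((Θ k).coeff 0) := by
    intro a b
    conv_lhs => rw [hkval]
    have h2 : (aeval ![a, b] : MvPolynomial (Fin 2) ℝ →ₐ[ℝ] ℝ)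
          (Polynomial.eval₂ MvPolynomial.C (X 0) ((Θ k).coeff 0))
        = Polynomial.eval₂
            (((aeval ![a, b] : MvPolynomial (Fin 2) ℝ →ₐ[ℝ] ℝ) : MvPolynomial (Fin 2) ℝ →+* ℝ).comp
              MvPolynomial.C)
            ((aeval ![a, b] : MvPolynomial (Fin 2) ℝ →ₐ[ℝ] ℝ) (X 0)) ((Θ k).coeff 0) :=
      Polynomial.hom_eval₂ _ _ _ _
    have h3 : (((aeval ![a, b] : MvPolynomial (Fin 2) ℝ →ₐ[ℝ] ℝ) : MvPolynomial (Fin 2) ℝ →+* ℝ).comp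
        MvPolynomial.C) = RingHom.id ℝ := by
      apply RingHom.ext
      intro r
      simp
    rw [h3] at h2
    have h4 : Polynomial.eval₂ (RingHom.id ℝ) a ((Θ k).coeff 0)
        = Polynomial.eval a ((Θ k).coeff 0) := rfl
    simp only [aeval_X] at h2
    rw [show (![a, b] 0) = a from rfl] at h2
    exact h2.trans h4
  -- ## case analysis on the constant term of κ
  by_cases hκa : Polynomial.eval 0 ((Θ k).coeff 0) = 0
  · -- k vanishes on the plane x = 0 : contradiction with E2 at (0,1,1)
    have h1 := congrArg (⇑(aeval ![(0:ℝ), 1, 1] : MvPolynomial (Fin 3) ℝ →ₐ[ℝ] ℝ)) E2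
    rw [map_mul, aeval2_comp] at h1
    simp only [map_add, map_mul, map_pow, aeval_X] at h1
    have h2 : (aeval ![(0:ℝ), 1] k : ℝ) = 0 := by rw [hkviaκ, hκa]
    rw [show (![(0:ℝ),1,1] 0) = 0 from rfl, show (![(0:ℝ),1,1] 1) = 1 from rfl,
      show (![(0:ℝ),1,1] 2) = 1 from rfl] at h1
    rw [h2, zero_mul] at h1
    norm_num at h1
  · -- κ is a nonzero constant c
    have hmm0at : Polynomial.eval 0 (M.coeff 0) = 0 := by
      have h5 := congrArg (Polynomial.eval 0) hκmm
      rw [Polynomial.eval_mul, Polynomial.eval_X] at h5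
      rcases mul_eq_zero.mp h5 with h6 | h6
      · exact absurd h6 hκa
      · exact h6
    obtain ⟨mm₁, hmm₁⟩ : Polynomial.X ∣ (M.coeff 0) := by
      rw [Polynomial.X_dvd_iff, Polynomial.coeff_zero_eq_eval_zero]
      exact hmm0at
    have hunit : ((Θ k).coeff 0) * mm₁ = 1 := by
      have h5 : Polynomial.X * (((Θ k).coeff 0) * mm₁) = Polynomial.X * 1 := by
        rw [mul_one]
        rw [hmm₁] at hκmm
        linear_combination hκmm
      exact mul_left_cancel₀ (Polynomial.X_ne_zero) h5
    have hκdeg : ((Θ k).coeff 0).natDegree = 0 :=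
      Polynomial.natDegree_eq_zero_of_isUnit (IsUnit.of_mul_eq_one _ hunit)
    have hκCc : (Θ k).coeff 0 = Polynomial.C (((Θ k).coeff 0).coeff 0) :=
      Polynomial.eq_C_of_natDegree_eq_zero hκdeg
    set c : ℝ := ((Θ k).coeff 0).coeff 0 with hc_def
    have hcne : c ≠ 0 := by
      intro hc0
      apply hk'0
      rw [hκC, hκCc, hc0]
      simp
    have hkC : k = C c := by
      rw [hkval, hκCc, Polynomial.eval₂_C]
    -- ## rewrite the main identity with k = C c
    have haevalid : ∀ p : MvPolynomial (Fin 2) ℝ, aeval ![(X 0 : MvPolynomial (Fin 2) ℝ), X 1] p = p := by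
      intro p
      have hv : ![(X 0 : MvPolynomial (Fin 2) ℝ), X 1] = (X : Fin 2 → MvPolynomial (Fin 2) ℝ) := by
        funext i; fin_cases i <;> simp
      rw [hv, aeval_X_left_apply]
    have hKC : (aeval ![(X 0 : MvPolynomial (Fin 3) ℝ), X 2] k) = C c := by
      rw [hkC]
      simp [MvPolynomial.algebraMap_eq]
    rw [hKC, hHval, hKC] at E2
    -- ## transport to (ℝ[x,y])[z]
    have hΨF : (aeval ![Polynomial.C (X 0 : MvPolynomial (Fin 2) ℝ),
          Polynomial.C (X 1 : MvPolynomial (Fin 2) ℝ), Polynomial.X]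
            : MvPolynomial (Fin 3) ℝ →ₐ[ℝ] Polynomial (MvPolynomial (Fin 2) ℝ))
          (aeval ![(X 0 : MvPolynomial (Fin 3) ℝ), X 1] f) = Polynomial.C f := by
      rw [aeval2_comp]
      have h6 := aeval2_comp
        (Polynomial.CAlgHom : MvPolynomial (Fin 2) ℝ →ₐ[ℝ] Polynomial (MvPolynomial (Fin 2) ℝ))
        (X 0) (X 1) f
      rw [haevalid] at h6
      simp only [aeval_X, Polynomial.CAlgHom] at h6 ⊢
      simp only [AlgHom.coe_mk, RingHom.coe_mk, MonoidHom.coe_mk, OneHom.coe_mk] at h6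
      simp only [Matrix.cons_val_zero, Matrix.cons_val_one, Matrix.head_cons]
      exact h6.symm
    have h1 := congrArg
      (⇑(aeval ![Polynomial.C (X 0 : MvPolynomial (Fin 2) ℝ),
          Polynomial.C (X 1 : MvPolynomial (Fin 2) ℝ), Polynomial.X]
            : MvPolynomial (Fin 3) ℝ →ₐ[ℝ] Polynomial (MvPolynomial (Fin 2) ℝ))) E2
    rw [map_mul, aeval2_comp, hΨF] at h1
    simp only [map_add, map_mul, map_pow, aeval_X, MvPolynomial.aeval_C,
      Matrix.cons_val_zero, Matrix.cons_val_one, Matrix.head_cons,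
      Polynomial.algebraMap_apply, MvPolynomial.algebraMap_eq,
      show (![Polynomial.C (X 0 : MvPolynomial (Fin 2) ℝ), Polynomial.C (X 1),
        (Polynomial.X : Polynomial (MvPolynomial (Fin 2) ℝ))] 2) = Polynomial.X from rfl] at h1
    -- ## rewrite the inner aeval as a mapped composition
    have hmapeq : ∀ q : Polynomial (Polynomial ℝ),
        q.map ((Polynomial.aeval f).toRingHom : Polynomial ℝ →+* MvPolynomial (Fin 2) ℝ)
          = Polynomial.eval₂
              ((Polynomial.C : MvPolynomial (Fin 2) ℝ →+* Polynomial (MvPolynomial (Fin 2) ℝ)).comp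
                ((Polynomial.aeval f).toRingHom)) Polynomial.X q := by
      intro q
      rw [← Polynomial.eval₂_map, Polynomial.eval₂_C_X]
    have hφeq : ((Polynomial.aeval (Polynomial.C f : Polynomial (MvPolynomial (Fin 2) ℝ))).toRingHom
          : Polynomial ℝ →+* Polynomial (MvPolynomial (Fin 2) ℝ))
        = (Polynomial.C : MvPolynomial (Fin 2) ℝ →+* Polynomial (MvPolynomial (Fin 2) ℝ)).comp
            ((Polynomial.aeval f).toRingHom) := by
      apply Polynomial.ringHom_ext
      · intro a
        simp [MvPolynomial.algebraMap_eq, Polynomial.algebraMap_apply]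
      · simp
    have hRHS : (aeval ![(Polynomial.C f : Polynomial (MvPolynomial (Fin 2) ℝ)),
          Polynomial.C (C δ) + Polynomial.X * Polynomial.C (C c)] g₁)
        = ((Θ g₁).comp
            (Polynomial.C (Polynomial.C δ) + Polynomial.X * Polynomial.C (Polynomial.C c))).map
            ((Polynomial.aeval f).toRingHom : Polynomial ℝ →+* MvPolynomial (Fin 2) ℝ) := by
      rw [theta_bridge, hmapeq, Polynomial.eval₂_comp, hφeq]
      congr 1
      simp [MvPolynomial.algebraMap_eq, Polynomial.algebraMap_apply]
    rw [hRHS] at h1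
    -- ## extract coefficients 0 and 2 (in z)
    rw [show (Polynomial.C (X 1 : MvPolynomial (Fin 2) ℝ))^3 = Polynomial.C ((X 1 : MvPolynomial (Fin 2) ℝ)^3) from by
      rw [Polynomial.C_pow]] at h1
    have I0 := congrArg (fun p => p.coeff 0) h1
    have I2 := congrArg (fun p => p.coeff 2) h1
    simp only [Polynomial.coeff_add, Polynomial.coeff_C_mul, Polynomial.coeff_map,
      Polynomial.coeff_C, Polynomial.coeff_X_pow, Polynomial.coeff_mul_C] at I0 I2
    norm_num at I0 I2
    set Q : Polynomial (Polynomial ℝ) := (Θ g₁).comp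
      (Polynomial.C (Polynomial.C δ) + Polynomial.C (Polynomial.C c) * Polynomial.X) with hQ
    -- I0 : X 0 + X 1 = C c * aeval f w0,  I2 : X 1 ^ 3 = C c * aeval f w2
    -- ## transport I0 to ℝ[x][y]
    have hθa : ∀ w : Polynomial ℝ,
        Θ (Polynomial.aeval f w) = Polynomial.aeval (Θ f) w := fun w =>
      (Polynomial.aeval_algHom_apply Θ f w).symm
    have J0 := congrArg (⇑Θ) I0
    rw [map_mul, hθa] at J0
    simp only [map_add, aeval_X, Matrix.cons_val_zero, Matrix.cons_val_one, Matrix.head_cons,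
      MvPolynomial.aeval_C, Polynomial.algebraMap_apply, MvPolynomial.algebraMap_eq,
      Algebra.algebraMap_self, RingHom.id_apply] at J0
    have hcompform : ∀ w : Polynomial ℝ, Polynomial.aeval (Θ f) w
        = (w.map (Polynomial.C : ℝ →+* Polynomial ℝ)).comp (Θ f) := by
      intro w
      rw [Polynomial.aeval_def, Polynomial.comp, Polynomial.eval₂_map]
      have hab : (algebraMap ℝ (Polynomial (Polynomial ℝ)))
          = ((Polynomial.C : Polynomial ℝ →+* Polynomial (Polynomial ℝ)).comp
              (Polynomial.C : ℝ →+* Polynomial ℝ)) := by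
        apply RingHom.ext
        intro r
        simp [Polynomial.algebraMap_apply]
      rw [hab]
    rw [hcompform] at J0
    have h1d : (Polynomial.C Polynomial.X + Polynomial.X : Polynomial (Polynomial ℝ)).natDegree
        = 1 := by
      rw [add_comm]
      exact Polynomial.natDegree_X_add_C _
    have hWne : (((Q.coeff 0).map
          (Polynomial.C : ℝ →+* Polynomial ℝ)).comp (Θ f)) ≠ 0 := by
      intro hz
      rw [hz, mul_zero] at J0
      have := congrArg Polynomial.natDegree J0
      rw [h1d, Polynomial.natDegree_zero] at this
      exact one_ne_zero this
    have hCcne : (Polynomial.C c : Polynomial ℝ) ≠ 0 := fun hz =>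
      hcne (by simpa using congrArg (Polynomial.eval 0) hz)
    have hdeg1 : ((Q.coeff 0).map
          (Polynomial.C : ℝ →+* Polynomial ℝ)).natDegree * (Θ f).natDegree = 1 := by
      have h9 := congrArg Polynomial.natDegree J0
      rw [h1d, Polynomial.natDegree_C_mul hCcne, Polynomial.natDegree_comp] at h9
      exact h9.symm
    have hW1 := Nat.eq_one_of_mul_eq_one_right hdeg1
    have hf1 := Nat.eq_one_of_mul_eq_one_left hdeg1
    -- ## f is linear: solve for its coefficients
    have hWexp : ((Q.coeff 0).map (Polynomial.C : ℝ →+* Polynomial ℝ))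
        = Polynomial.C (Polynomial.C ((Q.coeff 0).coeff 1)) * Polynomial.X
          + Polynomial.C (Polynomial.C ((Q.coeff 0).coeff 0)) := by
      have h11 := Polynomial.eq_X_add_C_of_natDegree_le_one (le_of_eq hW1)
      simpa [Polynomial.coeff_map] using h11
    have hfexp : (Θ f) = Polynomial.C ((Θ f).coeff 1) * Polynomial.X
        + Polynomial.C ((Θ f).coeff 0) :=
      Polynomial.eq_X_add_C_of_natDegree_le_one (le_of_eq hf1)
    rw [hWexp] at J0
    simp only [Polynomial.add_comp, Polynomial.mul_comp, Polynomial.C_comp,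
      Polynomial.X_comp] at J0
    have K1 := congrArg (fun p => p.coeff 1) J0
    have K0 := congrArg (fun p => p.coeff 0) J0
    simp only [Polynomial.coeff_add, Polynomial.coeff_C, Polynomial.coeff_C_mul,
      Polynomial.coeff_X_one, Polynomial.coeff_X_zero] at K1 K0
    norm_num at K1 K0
    -- K1 : 1 = C c * (C b1 * f1)   K0 : X = C c * (C b1 * f0 + C b0)
    have K1' : Polynomial.C c * Polynomial.C ((Q.coeff 0).coeff 1) * (Θ f).coeff 1
        = 1 := by linear_combination K1.symm
    have K0' : Polynomial.C c * Polynomial.C ((Q.coeff 0).coeff 1) * (Θ f).coeff 0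
        = Polynomial.X - Polynomial.C c * Polynomial.C ((Q.coeff 0).coeff 0) := by
      linear_combination K0.symm
    have hcb1 : c * (Q.coeff 0).coeff 1 ≠ 0 := by
      intro h0
      have h12 : Polynomial.C c * Polynomial.C ((Q.coeff 0).coeff 1)
          = (0 : Polynomial ℝ) := by
        rw [← Polynomial.C_mul, h0, Polynomial.C_0]
      rw [h12, zero_mul] at K1'
      exact one_ne_zero K1'.symm
    have hCcb1 : (Polynomial.C (c * (Q.coeff 0).coeff 1) : Polynomial ℝ) ≠ 0 := by
      simpa using hcb1
    have hf1v : (Θ f).coeff 1 = Polynomial.C (c * (Q.coeff 0).coeff 1)⁻¹ := by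
      have h13 : Polynomial.C (c * (Q.coeff 0).coeff 1) * (Θ f).coeff 1 = 1 := by
        rw [Polynomial.C_mul]; exact K1'
      calc (Θ f).coeff 1
          = Polynomial.C (c * (Q.coeff 0).coeff 1)⁻¹
            * (Polynomial.C (c * (Q.coeff 0).coeff 1) * (Θ f).coeff 1) := by
            rw [← mul_assoc, ← Polynomial.C_mul, inv_mul_cancel₀ hcb1, Polynomial.C_1, one_mul]
        _ = Polynomial.C (c * (Q.coeff 0).coeff 1)⁻¹ := by rw [h13, mul_one]
    have hf0v : (Θ f).coeff 0 = Polynomial.C (c * (Q.coeff 0).coeff 1)⁻¹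
        * (Polynomial.X - Polynomial.C (c * (Q.coeff 0).coeff 0)) := by
      have h13 : Polynomial.C (c * (Q.coeff 0).coeff 1) * (Θ f).coeff 0
          = Polynomial.X - Polynomial.C (c * (Q.coeff 0).coeff 0) := by
        rw [Polynomial.C_mul]
        rw [K0', Polynomial.C_mul]
      calc (Θ f).coeff 0
          = Polynomial.C (c * (Q.coeff 0).coeff 1)⁻¹
            * (Polynomial.C (c * (Q.coeff 0).coeff 1) * (Θ f).coeff 0) := by
            rw [← mul_assoc, ← Polynomial.C_mul, inv_mul_cancel₀ hcb1, Polynomial.C_1, one_mul]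
        _ = _ := by rw [h13]
    -- ## pointwise values of f
    have hfval : ∀ a b : ℝ, (aeval ![a, b] f : ℝ)
        = (c * (Q.coeff 0).coeff 1)⁻¹ * (a + b)
          - (c * (Q.coeff 0).coeff 1)⁻¹ * (c * (Q.coeff 0).coeff 0) := by
      intro a b
      rw [theta_bridge a b f]
      conv_lhs => rw [hfexp, hf1v, hf0v]
      simp only [Polynomial.eval₂_add, Polynomial.eval₂_mul, Polynomial.eval₂_sub,
        Polynomial.eval₂_C, Polynomial.eval₂_X, RingHom.coe_coe, Polynomial.coe_aeval_eq_eval,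
        Polynomial.eval_C, Polynomial.eval_X, AlgHom.toRingHom_eq_coe, Polynomial.aeval_C,
        Algebra.algebraMap_self, RingHom.id_apply, Polynomial.eval_sub, Polynomial.eval_mul]
      ring
    -- ## final contradiction using the y³-coefficient
    have hI2v : ∀ a b : ℝ, b ^ 3
        = c * Polynomial.eval
            ((c * (Q.coeff 0).coeff 1)⁻¹ * (a + b)
              - (c * (Q.coeff 0).coeff 1)⁻¹ * (c * (Q.coeff 0).coeff 0)) (Q.coeff 2) := by
      intro a b
      have h9 := congrArg (⇑(aeval ![a, b] : MvPolynomial (Fin 2) ℝ →ₐ[ℝ] ℝ)) I2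
      rw [map_mul, map_pow] at h9
      have hx1 : (aeval ![a, b] : MvPolynomial (Fin 2) ℝ →ₐ[ℝ] ℝ) (X 1) = b := by simp
      have hxc : (aeval ![a, b] : MvPolynomial (Fin 2) ℝ →ₐ[ℝ] ℝ) (C c) = c := by simp
      have h10 := Polynomial.aeval_algHom_apply
        (aeval ![a, b] : MvPolynomial (Fin 2) ℝ →ₐ[ℝ] ℝ) f (Q.coeff 2)
      rw [hx1, hxc, ← h10, hfval a b, Polynomial.coe_aeval_eq_eval] at h9
      exact h9
    have e0 := hI2v 0 0
    have e1 := hI2v (-1) 1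
    have harg : ((c * (Q.coeff 0).coeff 1)⁻¹ * ((0:ℝ) + 0)
          - (c * (Q.coeff 0).coeff 1)⁻¹ * (c * (Q.coeff 0).coeff 0))
        = ((c * (Q.coeff 0).coeff 1)⁻¹ * ((-1:ℝ) + 1)
          - (c * (Q.coeff 0).coeff 1)⁻¹ * (c * (Q.coeff 0).coeff 0)) := by ring
    rw [harg] at e0
    rw [← e0] at e1
    norm_num at e1
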